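/- Let 0 < p₂ ≤ p₁ ≤ ∞ and 1 ≤ n ≤ N < ∞. Then the approximation and Gelfand numbers of the identity map from ℓ_{p₁}^N to ℓ_{p₂}^N satisfy a_n(id : ℓ_{p₁}^N → ℓ_{p₂}^N) = c_n(id : ℓ_{p₁}^N → ℓ_{p₂}^N) = (N − n + 1)^{1/p₂ − 1/p₁}, where 1/∞ is interpreted as 0. -/

import Mathlib

open scoped ENNReal BigOperators

/-- The ℓ_p quasi-norm on ℝ^N, for `p : ℝ≥0∞` (with `p = ∞` giving the sup-norm). -/
noncomputable def pNorm (p : ℝ≥0∞) {N : ℕ} (x : Fin N → ℝ) : ℝ :=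
  if p = ∞ then ⨆ i, |x i| else (∑ i, |x i| ^ p.toReal) ^ (1 / p.toReal)

/-- The n-th Kolmogorov number of the identity map `id : ℓ_p^N → ℓ_q^N`. -/
noncomputable def kolmogorovNumber (p q : ℝ≥0∞) (N n : ℕ) : ℝ :=
  sInf { r : ℝ | ∃ V : Submodule ℝ (Fin N → ℝ), Module.finrank ℝ (↥V) < n ∧
    r = sSup { s : ℝ | ∃ x : Fin N → ℝ, pNorm p x ≤ 1 ∧
      s = sInf { t : ℝ | ∃ v ∈ V, t = pNorm q (x - v) } } }

/-- The n-th Gelfand number of the identity map `id : ℓ_p^N → ℓ_q^N`. -/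
noncomputable def gelfandNumber (p q : ℝ≥0∞) (N n : ℕ) : ℝ :=
  sInf { r : ℝ | ∃ M : Submodule ℝ (Fin N → ℝ), N - Module.finrank ℝ (↥M) < n ∧
    r = sSup { s : ℝ | ∃ x ∈ M, pNorm p x ≤ 1 ∧ s = pNorm q x } }

/-- The n-th approximation number of the identity map `id : ℓ_p^N → ℓ_q^N`. -/
noncomputable def approxNumber (p q : ℝ≥0∞) (N n : ℕ) : ℝ :=
  sInf { r : ℝ | ∃ L : (Fin N → ℝ) →ₗ[ℝ] (Fin N → ℝ),
    Module.finrank ℝ (↥(LinearMap.range L)) < n ∧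
    r = sSup { s : ℝ | ∃ x : Fin N → ℝ, pNorm p x ≤ 1 ∧ s = pNorm q (x - L x) } }

lemma pNorm_top {N : ℕ} (x : Fin N → ℝ) : pNorm ∞ x = ⨆ i, |x i| := if_pos rfl

lemma pNorm_ne_top {p : ℝ≥0∞} (h : p ≠ ∞) {N : ℕ} (x : Fin N → ℝ) :
    pNorm p x = (∑ i, |x i| ^ p.toReal) ^ (1 / p.toReal) := if_neg h

lemma pNorm_nonneg (p : ℝ≥0∞) {N : ℕ} (x : Fin N → ℝ) : 0 ≤ pNorm p x := by
  by_cases h : p = ∞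
  · subst h; rw [pNorm_top]; exact Real.iSup_nonneg fun i => abs_nonneg _
  · rw [pNorm_ne_top h]
    exact Real.rpow_nonneg
      (Finset.sum_nonneg fun i _ => Real.rpow_nonneg (abs_nonneg _) _) _

lemma toReal_pos' {p : ℝ≥0∞} (hp : 0 < p) (hne : p ≠ ∞) : 0 < p.toReal :=
  ENNReal.toReal_pos hp.ne' hne

lemma pNorm_zero (p : ℝ≥0∞) (hp : 0 < p) {N : ℕ} : pNorm p (0 : Fin N → ℝ) = 0 := by
  by_cases h : p = ∞
  · subst h; rw [pNorm_top]; simp [Real.iSup_const_zero]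
  · have ht : p.toReal ≠ 0 := (toReal_pos' hp h).ne'
    rw [pNorm_ne_top h]
    simp [Real.zero_rpow ht, Real.zero_rpow (inv_ne_zero ht), Real.zero_rpow (one_div_ne_zero ht)]

lemma pNorm_smul (p : ℝ≥0∞) (hp : 0 < p) {N : ℕ} (c : ℝ) (x : Fin N → ℝ) :
    pNorm p (c • x) = |c| * pNorm p x := by
  by_cases h : p = ∞
  · subst h; rw [pNorm_top, pNorm_top]
    simp only [Pi.smul_apply, smul_eq_mul, abs_mul]
    exact (Real.mul_iSup_of_nonneg (abs_nonneg c) _).symm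
  · have ht : 0 < p.toReal := toReal_pos' hp h
    rw [pNorm_ne_top h, pNorm_ne_top h]
    simp only [Pi.smul_apply, smul_eq_mul, abs_mul]
    have : ∀ i : Fin N, (|c| * |x i|) ^ p.toReal = |c| ^ p.toReal * |x i| ^ p.toReal :=
      fun i => Real.mul_rpow (abs_nonneg c) (abs_nonneg _)
    simp_rw [this, ← Finset.mul_sum]
    rw [Real.mul_rpow (Real.rpow_nonneg (abs_nonneg c) _)
        (Finset.sum_nonneg fun i _ => Real.rpow_nonneg (abs_nonneg _) _),
      ← Real.rpow_mul (abs_nonneg c), mul_one_div_cancel ht.ne', Real.rpow_one]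

lemma sum_rpow_le_one {p : ℝ≥0∞} (hp : 0 < p) (h : p ≠ ∞) {N : ℕ} {x : Fin N → ℝ}
    (hx : pNorm p x ≤ 1) : ∑ i, |x i| ^ p.toReal ≤ 1 := by
  have ht : 0 < p.toReal := toReal_pos' hp h
  have hS : 0 ≤ ∑ i, |x i| ^ p.toReal :=
    Finset.sum_nonneg fun i _ => Real.rpow_nonneg (abs_nonneg _) _
  rw [pNorm_ne_top h] at hx
  have := Real.rpow_le_rpow (Real.rpow_nonneg hS _) hx ht.le
  rwa [← Real.rpow_mul hS, one_div_mul_cancel ht.ne', Real.rpow_one, Real.one_rpow] at this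

lemma abs_le_one_of_pNorm_le_one {p : ℝ≥0∞} (hp : 0 < p) {N : ℕ} {x : Fin N → ℝ}
    (hx : pNorm p x ≤ 1) (i : Fin N) : |x i| ≤ 1 := by
  by_cases h : p = ∞
  · subst h; rw [pNorm_top] at hx
    exact le_trans (le_ciSup (f := fun j => |x j|) (Set.Finite.bddAbove (Set.finite_range _)) i) hx
  · have ht : 0 < p.toReal := toReal_pos' hp h
    have h1 : |x i| ^ p.toReal ≤ 1 :=
      le_trans (Finset.single_le_sum (fun j _ => Real.rpow_nonneg (abs_nonneg _) _)
        (Finset.mem_univ i)) (sum_rpow_le_one hp h hx)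
    by_contra hc
    push_neg at hc
    exact absurd h1 (not_le.2 (Real.one_lt_rpow hc ht))

lemma pNorm_le_of_forall_abs_le {p : ℝ≥0∞} (hp : 0 < p) {N : ℕ} {x : Fin N → ℝ} {C : ℝ}
    (hC : 0 ≤ C) (h : ∀ i, |x i| ≤ C) : pNorm p x ≤ (N : ℝ) ^ (1 / p.toReal) * C := by
  by_cases ht : p = ∞
  · subst ht
    rw [pNorm_top]
    simp only [ENNReal.toReal_top, div_zero, Real.rpow_zero, one_mul]
    exact Real.iSup_le h hC
  · have ht' : 0 < p.toReal := toReal_pos' hp ht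
    rw [pNorm_ne_top ht]
    have h1 : ∑ i, |x i| ^ p.toReal ≤ (N : ℝ) * C ^ p.toReal := by
      calc ∑ i, |x i| ^ p.toReal ≤ ∑ _i : Fin N, C ^ p.toReal :=
            Finset.sum_le_sum fun i _ => Real.rpow_le_rpow (abs_nonneg _) (h i) ht'.le
        _ = (N : ℝ) * C ^ p.toReal := by simp [Finset.sum_const, nsmul_eq_mul]
    calc (∑ i, |x i| ^ p.toReal) ^ (1 / p.toReal)
        ≤ ((N : ℝ) * C ^ p.toReal) ^ (1 / p.toReal) :=
          Real.rpow_le_rpow (Finset.sum_nonneg fun i _ => Real.rpow_nonneg (abs_nonneg _) _)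
            h1 (by positivity)
      _ = (N : ℝ) ^ (1 / p.toReal) * C := by
          rw [Real.mul_rpow (Nat.cast_nonneg N) (Real.rpow_nonneg hC _),
            ← Real.rpow_mul hC, mul_one_div_cancel ht'.ne', Real.rpow_one]

/-- Power mean inequality: for `0 < q ≤ p`,
`(∑_{i∈S} a_i^q)^{1/q} ≤ |S|^{1/q-1/p} (∑_{i∈S} a_i^p)^{1/p}`. -/
lemma sum_rpow_rpow_le {ι : Type*} (S : Finset ι) {q p : ℝ} (hq : 0 < q) (hqp : q ≤ p)
    {a : ι → ℝ} (ha : ∀ i ∈ S, 0 ≤ a i) :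
    (∑ i ∈ S, a i ^ q) ^ (1 / q) ≤
      (S.card : ℝ) ^ (1 / q - 1 / p) * (∑ i ∈ S, a i ^ p) ^ (1 / p) := by
  have hp : 0 < p := lt_of_lt_of_le hq hqp
  rcases S.eq_empty_or_nonempty with rfl | hSne
  · simp only [Finset.sum_empty, Finset.card_empty, Nat.cast_zero]
    rw [Real.zero_rpow (one_div_ne_zero hq.ne')]
    exact mul_nonneg (Real.rpow_nonneg le_rfl _) (Real.rpow_nonneg le_rfl _)
  have hc : 0 < (S.card : ℝ) := by exact_mod_cast Finset.card_pos.2 hSne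
  set X := ∑ i ∈ S, a i ^ q with hX
  set B := ∑ i ∈ S, a i ^ p with hB
  have hX0 : 0 ≤ X := Finset.sum_nonneg fun i hi => Real.rpow_nonneg (ha i hi) _
  have hB0 : 0 ≤ B := Finset.sum_nonneg fun i hi => Real.rpow_nonneg (ha i hi) _
  have jensen := Real.rpow_arith_mean_le_arith_mean_rpow S (fun _ => 1 / (S.card : ℝ))
    (fun i => a i ^ q) (fun i _ => by positivity)
    (by rw [Finset.sum_const, nsmul_eq_mul, mul_one_div, div_self hc.ne'])
    (fun i hi => Real.rpow_nonneg (ha i hi) _)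
    ((one_le_div hq).2 hqp)
  have hz : ∀ i ∈ S, (a i ^ q) ^ (p / q) = a i ^ p := by
    intro i hi
    rw [← Real.rpow_mul (ha i hi), mul_comm, div_mul_cancel₀ _ hq.ne']
  rw [show (∑ i ∈ S, 1 / (S.card : ℝ) * (a i ^ q) ^ (p / q))
      = ∑ i ∈ S, 1 / (S.card : ℝ) * a i ^ p from
    Finset.sum_congr rfl (fun i hi => by rw [hz i hi]),
    ← Finset.mul_sum, ← Finset.mul_sum, ← hX, ← hB] at jensen
  -- jensen : (1/c * X) ^ (p/q) ≤ 1/c * B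
  have step : (1 / (S.card : ℝ)) * X ≤ ((1 / (S.card : ℝ)) * B) ^ (q / p) := by
    have h2 := Real.rpow_le_rpow (Real.rpow_nonneg (by positivity) _) jensen
      (le_of_lt (div_pos hq hp))
    rwa [← Real.rpow_mul (by positivity), div_mul_div_comm, mul_comm p q,
      div_self (by positivity), Real.rpow_one] at h2
  have step2 : X ≤ (S.card : ℝ) ^ (1 - q / p) * B ^ (q / p) := by
    calc X = (S.card : ℝ) * ((1 / (S.card : ℝ)) * X) := by field_simp
      _ ≤ (S.card : ℝ) * ((1 / (S.card : ℝ)) * B) ^ (q / p) :=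
          mul_le_mul_of_nonneg_left step hc.le
      _ = (S.card : ℝ) ^ (1 - q / p) * B ^ (q / p) := by
          rw [Real.mul_rpow (by positivity) hB0, ← mul_assoc]
          congr 1
          rw [one_div, Real.inv_rpow hc.le, ← Real.rpow_neg hc.le,
            show (S.card : ℝ) * (S.card : ℝ) ^ (-(q / p))
              = (S.card : ℝ) ^ (1 : ℝ) * (S.card : ℝ) ^ (-(q / p)) by rw [Real.rpow_one],
            ← Real.rpow_add hc, sub_eq_add_neg]
  calc X ^ (1 / q) ≤ ((S.card : ℝ) ^ (1 - q / p) * B ^ (q / p)) ^ (1 / q) :=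
        Real.rpow_le_rpow hX0 step2 (by positivity)
    _ = (S.card : ℝ) ^ (1 / q - 1 / p) * B ^ (1 / p) := by
        have hq' : q ≠ 0 := hq.ne'
        have hp' : p ≠ 0 := hp.ne'
        rw [Real.mul_rpow (Real.rpow_nonneg hc.le _) (Real.rpow_nonneg hB0 _),
          ← Real.rpow_mul hc.le, ← Real.rpow_mul hB0,
          show q / p * (1 / q) = 1 / p by
            rw [div_mul_div_comm, mul_one, mul_comm, ← div_div, div_self hq'],
          show (1 - q / p) * (1 / q) = 1 / q - 1 / p by
            rw [sub_mul, one_mul, div_mul_div_comm, mul_one, mul_comm, ← div_div, div_self hq']]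

lemma key_upper {N : ℕ} {p₁ p₂ : ℝ≥0∞} (h1 : 0 < p₂) (h2 : p₂ ≤ p₁)
    (S : Finset (Fin N)) {y x : Fin N → ℝ} (hyx : ∀ i, |y i| ≤ |x i|)
    (hy0 : ∀ i ∉ S, y i = 0) :
    pNorm p₂ y ≤ (S.card : ℝ) ^ (1 / p₂.toReal - 1 / p₁.toReal) * pNorm p₁ x := by
  by_cases hp2 : p₂ = ∞
  · subst hp2
    have hp1 : p₁ = ∞ := top_le_iff.1 h2
    subst hp1
    simp only [ENNReal.toReal_top, div_zero, sub_zero, Real.rpow_zero, one_mul,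
      pNorm_top]
    exact Real.iSup_le
      (fun i => (hyx i).trans (le_ciSup (f := fun j => |x j|)
        (Set.Finite.bddAbove (Set.finite_range _)) i))
      (Real.iSup_nonneg fun i => abs_nonneg _)
  · have hq : 0 < p₂.toReal := toReal_pos' h1 hp2
    have hsum : ∑ i ∈ S, |y i| ^ p₂.toReal = ∑ i, |y i| ^ p₂.toReal :=
      Finset.sum_subset (Finset.subset_univ S)
        (fun i _ hi => by rw [hy0 i hi, abs_zero, Real.zero_rpow hq.ne'])
    rw [pNorm_ne_top hp2, ← hsum]
    by_cases hp1 : p₁ = ∞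
    · subst hp1
      simp only [ENNReal.toReal_top, div_zero, sub_zero, pNorm_top]
      set M := ⨆ i, |x i| with hM
      have hM0 : 0 ≤ M := Real.iSup_nonneg fun i => abs_nonneg _
      have hbd : ∀ i ∈ S, |y i| ^ p₂.toReal ≤ M ^ p₂.toReal := fun i _ =>
        Real.rpow_le_rpow (abs_nonneg _)
          ((hyx i).trans (le_ciSup (f := fun j => |x j|)
            (Set.Finite.bddAbove (Set.finite_range _)) i)) hq.le
      calc (∑ i ∈ S, |y i| ^ p₂.toReal) ^ (1 / p₂.toReal)
          ≤ ((S.card : ℝ) * M ^ p₂.toReal) ^ (1 / p₂.toReal) := by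
            refine Real.rpow_le_rpow
              (Finset.sum_nonneg fun i _ => Real.rpow_nonneg (abs_nonneg _) _) ?_
              (by positivity)
            calc ∑ i ∈ S, |y i| ^ p₂.toReal ≤ ∑ _i ∈ S, M ^ p₂.toReal :=
                  Finset.sum_le_sum hbd
              _ = (S.card : ℝ) * M ^ p₂.toReal := by
                  rw [Finset.sum_const, nsmul_eq_mul]
        _ = (S.card : ℝ) ^ (1 / p₂.toReal) * M := by
            rw [Real.mul_rpow (Nat.cast_nonneg _) (Real.rpow_nonneg hM0 _),
              ← Real.rpow_mul hM0, mul_one_div_cancel hq.ne', Real.rpow_one]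
    · have hqp : p₂.toReal ≤ p₁.toReal := (ENNReal.toReal_le_toReal hp2 hp1).2 h2
      rw [pNorm_ne_top hp1]
      calc (∑ i ∈ S, |y i| ^ p₂.toReal) ^ (1 / p₂.toReal)
          ≤ (S.card : ℝ) ^ (1 / p₂.toReal - 1 / p₁.toReal) *
              (∑ i ∈ S, |y i| ^ p₁.toReal) ^ (1 / p₁.toReal) :=
            sum_rpow_rpow_le S hq hqp (fun i _ => abs_nonneg _)
        _ ≤ (S.card : ℝ) ^ (1 / p₂.toReal - 1 / p₁.toReal) *
              (∑ i, |x i| ^ p₁.toReal) ^ (1 / p₁.toReal) := by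
            refine mul_le_mul_of_nonneg_left ?_ (Real.rpow_nonneg (Nat.cast_nonneg _) _)
            refine Real.rpow_le_rpow
              (Finset.sum_nonneg fun i _ => Real.rpow_nonneg (abs_nonneg _) _) ?_
              (by positivity)
            calc ∑ i ∈ S, |y i| ^ p₁.toReal ≤ ∑ i ∈ S, |x i| ^ p₁.toReal :=
                  Finset.sum_le_sum fun i _ =>
                    Real.rpow_le_rpow (abs_nonneg _) (hyx i) (hq.trans_le hqp).le
              _ ≤ ∑ i, |x i| ^ p₁.toReal :=
                  Finset.sum_le_sum_of_subset_of_nonneg (Finset.subset_univ S)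
                    (fun i _ _ => Real.rpow_nonneg (abs_nonneg _) _)

lemma key_lower {N : ℕ} {p₁ p₂ : ℝ≥0∞} (h1 : 0 < p₂) (h2 : p₂ ≤ p₁) {x : Fin N → ℝ}
    (hx1 : ∀ i, |x i| ≤ 1) {m : ℕ} (hm : 1 ≤ m)
    (hcard : m ≤ (Finset.univ.filter (fun i => |x i| = 1)).card) :
    (m : ℝ) ^ (1 / p₂.toReal - 1 / p₁.toReal) * pNorm p₁ x ≤ pNorm p₂ x := by
  by_cases hp2 : p₂ = ∞
  · subst hp2
    have hp1 : p₁ = ∞ := top_le_iff.1 h2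
    subst hp1
    simp only [ENNReal.toReal_top, div_zero, sub_zero, Real.rpow_zero, one_mul, le_refl]
  · have hq : 0 < p₂.toReal := toReal_pos' h1 hp2
    have hA0 : 0 ≤ ∑ i, |x i| ^ p₂.toReal :=
      Finset.sum_nonneg fun i _ => Real.rpow_nonneg (abs_nonneg _) _
    have hmA : (m : ℝ) ≤ ∑ i, |x i| ^ p₂.toReal := by
      calc (m : ℝ) ≤ ((Finset.univ.filter (fun i => |x i| = 1)).card : ℝ) := by
            exact_mod_cast hcard
        _ = ∑ i ∈ Finset.univ.filter (fun i => |x i| = 1), |x i| ^ p₂.toReal := by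
            rw [Finset.sum_congr rfl (fun i hi => by
              rw [(Finset.mem_filter.1 hi).2, Real.one_rpow]), Finset.sum_const,
              nsmul_eq_mul, mul_one]
        _ ≤ ∑ i, |x i| ^ p₂.toReal :=
            Finset.sum_le_sum_of_subset_of_nonneg (Finset.filter_subset _ _)
              (fun i _ _ => Real.rpow_nonneg (abs_nonneg _) _)
    rw [pNorm_ne_top hp2]
    by_cases hp1 : p₁ = ∞
    · subst hp1
      simp only [ENNReal.toReal_top, div_zero, sub_zero, pNorm_top]
      calc (m : ℝ) ^ (1 / p₂.toReal) * (⨆ i, |x i|)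
          ≤ (m : ℝ) ^ (1 / p₂.toReal) * 1 :=
            mul_le_mul_of_nonneg_left (Real.iSup_le hx1 zero_le_one)
              (Real.rpow_nonneg (Nat.cast_nonneg _) _)
        _ ≤ (∑ i, |x i| ^ p₂.toReal) ^ (1 / p₂.toReal) := by
            rw [mul_one]
            exact Real.rpow_le_rpow (Nat.cast_nonneg _) hmA (by positivity)
    · have hp : 0 < p₁.toReal := toReal_pos' (h1.trans_le h2) hp1
      have hqp : p₂.toReal ≤ p₁.toReal := (ENNReal.toReal_le_toReal hp2 hp1).2 h2
      have hexp : (0 : ℝ) ≤ 1 / p₂.toReal - 1 / p₁.toReal := by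
        rw [sub_nonneg]
        exact one_div_le_one_div_of_le hq hqp
      have hBA : ∑ i, |x i| ^ p₁.toReal ≤ ∑ i, |x i| ^ p₂.toReal := by
        refine Finset.sum_le_sum fun i _ => ?_
        rcases eq_or_lt_of_le (abs_nonneg (x i)) with h | h
        · rw [← h, Real.zero_rpow hq.ne', Real.zero_rpow hp.ne']
        · exact Real.rpow_le_rpow_of_exponent_ge h (hx1 i) hqp
      have hApos : (0 : ℝ) < ∑ i, |x i| ^ p₂.toReal :=
        lt_of_lt_of_le (by exact_mod_cast hm) hmA
      rw [pNorm_ne_top hp1]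
      have key : (∑ i, |x i| ^ p₂.toReal) ^ (1 / p₂.toReal)
          = (∑ i, |x i| ^ p₂.toReal) ^ (1 / p₂.toReal - 1 / p₁.toReal) *
            (∑ i, |x i| ^ p₂.toReal) ^ (1 / p₁.toReal) := by
        rw [← Real.rpow_add hApos, sub_add_cancel]
      rw [key]
      exact mul_le_mul (Real.rpow_le_rpow (Nat.cast_nonneg _) hmA hexp)
        (Real.rpow_le_rpow (Finset.sum_nonneg fun i _ => Real.rpow_nonneg (abs_nonneg _) _)
          hBA (by positivity))
        (Real.rpow_nonneg (Finset.sum_nonneg fun i _ =>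
          Real.rpow_nonneg (abs_nonneg _) _) _)
        (Real.rpow_nonneg hApos.le _)

lemma exists_flat_vector {N : ℕ} (M : Submodule ℝ (Fin N → ℝ)) :
    ∃ x : Fin N → ℝ, x ∈ M ∧ (∀ i, |x i| ≤ 1) ∧
      Module.finrank ℝ M ≤ (Finset.univ.filter (fun i => |x i| = 1)).card := by
  classical
  set P : Set (Fin N → ℝ) := (M : Set (Fin N → ℝ)) ∩ Set.pi Set.univ (fun _ => Set.Icc (-1:ℝ) 1)
    with hP
  have hPc : IsCompact P :=
    ((isCompact_univ_pi fun _ => isCompact_Icc).inter_left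
      (Submodule.closed_of_finiteDimensional M))
  have hPne : P.Nonempty := ⟨0, M.zero_mem, by intro i _; exact ⟨by norm_num, by norm_num⟩⟩
  obtain ⟨x, hx⟩ := hPc.extremePoints_nonempty hPne
  obtain ⟨hxP, hxext⟩ := hx
  have hxM : x ∈ M := hxP.1
  have hxle : ∀ i, |x i| ≤ 1 := fun i => abs_le.2 (hxP.2 i (Set.mem_univ i))
  refine ⟨x, hxM, hxle, ?_⟩
  by_contra hlt
  push_neg at hlt
  set T : Finset (Fin N) := Finset.univ.filter (fun i => |x i| = 1) with hT
  -- the restriction map to coordinates in T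
  set Φ : (Fin N → ℝ) →ₗ[ℝ] (↥T → ℝ) :=
    LinearMap.funLeft ℝ ℝ (fun i : ↥T => (i : Fin N)) with hΦ
  have hΦsurj : Function.Surjective Φ :=
    LinearMap.funLeft_surjective_of_injective ℝ ℝ _ Subtype.val_injective
  have hker : Module.finrank ℝ (LinearMap.ker Φ) = N - T.card := by
    have h := LinearMap.finrank_range_add_finrank_ker Φ
    rw [LinearMap.range_eq_top.2 hΦsurj, finrank_top] at h
    have h1 : Module.finrank ℝ (↥T → ℝ) = T.card := by
      rw [Module.finrank_pi]; exact Fintype.card_coe T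
    have h2 : Module.finrank ℝ (Fin N → ℝ) = N := by
      rw [Module.finrank_pi]; exact Fintype.card_fin N
    omega
  have hMN : Module.finrank ℝ M ≤ N := by
    have := Submodule.finrank_le M
    rwa [Module.finrank_pi, Fintype.card_fin N] at this
  have hWpos : 0 < Module.finrank ℝ ↥(M ⊓ LinearMap.ker Φ) := by
    have h := Submodule.finrank_sup_add_finrank_inf_eq M (LinearMap.ker Φ)
    have h2 : Module.finrank ℝ ↥(M ⊔ LinearMap.ker Φ) ≤ N := by
      have := Submodule.finrank_le (M ⊔ LinearMap.ker Φ)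
      rwa [Module.finrank_pi, Fintype.card_fin N] at this
    have h3 : T.card ≤ N := by
      have := Finset.card_le_univ T
      simpa using this
    omega
  have hWne : M ⊓ LinearMap.ker Φ ≠ ⊥ := by
    intro hcon
    rw [hcon, finrank_bot] at hWpos
    exact lt_irrefl 0 hWpos
  obtain ⟨y, hyW, hyne⟩ := Submodule.exists_mem_ne_zero_of_ne_bot hWne
  have hyM : y ∈ M := hyW.1
  have hyker : ∀ i ∈ T, y i = 0 := by
    intro i hi
    have h' : y ∈ LinearMap.ker Φ := hyW.2
    rw [LinearMap.mem_ker] at h'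
    have := congrFun h' ⟨i, hi⟩
    simpa [hΦ, LinearMap.funLeft] using this
  -- choose the perturbation size
  have hTU : (Finset.univ \ T).Nonempty := by
    rw [← Finset.card_pos, Finset.card_sdiff_of_subset (Finset.subset_univ T)]
    have h3 : Module.finrank ℝ M ≤ N := by
      have := Submodule.finrank_le M
      rwa [Module.finrank_pi, Fintype.card_fin N] at this
    simp only [Finset.card_univ, Fintype.card_fin]
    omega
  set C : ℝ := 1 + ∑ j, |y j| with hC
  have hC0 : 0 < C := by positivity
  have hyC : ∀ i, |y i| ≤ C := by
    intro i
    calc |y i| ≤ ∑ j, |y j| :=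
          Finset.single_le_sum (f := fun j => |y j|) (fun j _ => abs_nonneg _)
            (Finset.mem_univ i)
      _ ≤ C := by rw [hC]; linarith
  set ε : ℝ := (Finset.univ \ T).inf' hTU (fun i => (1 - |x i|) / C) with hε
  have hxlt : ∀ i ∈ Finset.univ \ T, |x i| < 1 := by
    intro i hi
    have : ¬ |x i| = 1 := by
      intro hcon
      exact (Finset.mem_sdiff.1 hi).2 (Finset.mem_filter.2 ⟨Finset.mem_univ i, hcon⟩)
    exact lt_of_le_of_ne (hxle i) this
  have hεpos : 0 < ε := by
    rw [hε, Finset.lt_inf'_iff]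
    intro i hi
    exact div_pos (by linarith [hxlt i hi]) hC0
  have hbound : ∀ i, |x i| + ε * |y i| ≤ 1 := by
    intro i
    by_cases hi : i ∈ T
    · rw [hyker i hi]
      simp [hxle i]
    · have hi' : i ∈ Finset.univ \ T := Finset.mem_sdiff.2 ⟨Finset.mem_univ i, hi⟩
      have h1 : ε ≤ (1 - |x i|) / C := Finset.inf'_le _ hi'
      have h2 : ε * |y i| ≤ (1 - |x i|) / C * C :=
        mul_le_mul h1 (hyC i) (abs_nonneg _) (div_nonneg (by linarith [hxle i]) hC0.le)
      rw [div_mul_cancel₀ _ hC0.ne'] at h2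
      linarith
  -- the two perturbed points
  have hmem : ∀ (s : ℝ), |s| ≤ ε → x + s • y ∈ P := by
    intro s hs
    constructor
    · exact M.add_mem hxM (M.smul_mem s hyM)
    · intro i _
      rw [Set.mem_Icc, ← abs_le]
      calc |(x + s • y) i| ≤ |x i| + |s| * |y i| := by
            simp only [Pi.add_apply, Pi.smul_apply, smul_eq_mul]
            calc |x i + s * y i| ≤ |x i| + |s * y i| := abs_add_le _ _
              _ = |x i| + |s| * |y i| := by rw [abs_mul]
        _ ≤ |x i| + ε * |y i| := by
            have := mul_le_mul_of_nonneg_right hs (abs_nonneg (y i))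
            linarith
        _ ≤ 1 := hbound i
  have hp1 : x + ε • y ∈ P := hmem ε (by rw [abs_of_pos hεpos])
  have hp2 : x - ε • y ∈ P := by
    have := hmem (-ε) (by rw [abs_neg, abs_of_pos hεpos])
    rwa [neg_smul, ← sub_eq_add_neg] at this
  have hseg : x ∈ openSegment ℝ (x + ε • y) (x - ε • y) := by
    refine ⟨1/2, 1/2, by norm_num, by norm_num, by norm_num, ?_⟩
    module
  have heq := hxext hp1 hp2 hseg
  have hzero : ε • y = 0 := by
    have : x + ε • y = x := heq
    rwa [add_eq_left] at this
  exact hyne ((smul_eq_zero.1 hzero).resolve_left hεpos.ne')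

lemma one_le_pNorm {p : ℝ≥0∞} (hp : 0 < p) {N : ℕ} {x : Fin N → ℝ} {i : Fin N}
    (hi : |x i| = 1) : 1 ≤ pNorm p x := by
  by_cases h : p = ∞
  · subst h; rw [pNorm_top]
    calc (1 : ℝ) = |x i| := hi.symm
      _ ≤ ⨆ j, |x j| := le_ciSup (f := fun j => |x j|)
          (Set.Finite.bddAbove (Set.finite_range _)) i
  · have ht : 0 < p.toReal := toReal_pos' hp h
    rw [pNorm_ne_top h]
    have hs : (1 : ℝ) ≤ ∑ j, |x j| ^ p.toReal := by
      calc (1 : ℝ) = |x i| ^ p.toReal := by rw [hi, Real.one_rpow]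
        _ ≤ ∑ j, |x j| ^ p.toReal :=
          Finset.single_le_sum (f := fun j => |x j| ^ p.toReal)
            (fun j _ => Real.rpow_nonneg (abs_nonneg _) _) (Finset.mem_univ i)
    calc (1 : ℝ) = 1 ^ (1 / p.toReal) := (Real.one_rpow _).symm
      _ ≤ (∑ j, |x j| ^ p.toReal) ^ (1 / p.toReal) :=
        Real.rpow_le_rpow zero_le_one hs (by positivity)

lemma theta_nonneg {p₁ p₂ : ℝ≥0∞} (h1 : 0 < p₂) (h2 : p₂ ≤ p₁) :
    0 ≤ 1 / p₂.toReal - 1 / p₁.toReal := by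
  by_cases hp2 : p₂ = ∞
  · subst hp2
    have hp1 : p₁ = ∞ := top_le_iff.1 h2
    subst hp1; simp
  · have hq : 0 < p₂.toReal := toReal_pos' h1 hp2
    by_cases hp1 : p₁ = ∞
    · subst hp1; simp
    · have hqp : p₂.toReal ≤ p₁.toReal := (ENNReal.toReal_le_toReal hp2 hp1).2 h2
      rw [sub_nonneg]
      exact one_div_le_one_div_of_le hq hqp

lemma finrank_ker_funLeft {N : ℕ} (T : Finset (Fin N)) :
    Module.finrank ℝ
      (LinearMap.ker (LinearMap.funLeft ℝ ℝ (fun i : ↥T => (i : Fin N)))) = N - T.card := by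
  have hsurj : Function.Surjective (LinearMap.funLeft ℝ ℝ (fun i : ↥T => (i : Fin N))) :=
    LinearMap.funLeft_surjective_of_injective ℝ ℝ _ Subtype.val_injective
  have h := LinearMap.finrank_range_add_finrank_ker
    (LinearMap.funLeft ℝ ℝ (fun i : ↥T => (i : Fin N)))
  rw [LinearMap.range_eq_top.2 hsurj, finrank_top] at h
  have h1 : Module.finrank ℝ (↥T → ℝ) = T.card := by
    rw [Module.finrank_pi]; exact Fintype.card_coe T
  have h2 : Module.finrank ℝ (Fin N → ℝ) = N := by
    rw [Module.finrank_pi]; exact Fintype.card_fin N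
  omega

lemma bddAbove_approxSet {p₁ p₂ : ℝ≥0∞} (h1 : 0 < p₂) (h2 : 0 < p₁) {N : ℕ}
    (L : (Fin N → ℝ) →ₗ[ℝ] (Fin N → ℝ)) :
    BddAbove {s : ℝ | ∃ x : Fin N → ℝ, pNorm p₁ x ≤ 1 ∧ s = pNorm p₂ (x - L x)} := by
  classical
  set g : Fin N → (Fin N → ℝ) := fun j => L (fun k => if j = k then (1:ℝ) else 0) with hg
  set C : ℝ := 1 + ∑ j, ∑ i, |g j i| with hC
  have hC0 : (0:ℝ) ≤ C := by positivity
  refine ⟨(N : ℝ) ^ (1 / p₂.toReal) * C, ?_⟩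
  rintro s ⟨x, hx, rfl⟩
  have hxle : ∀ i, |x i| ≤ 1 := abs_le_one_of_pNorm_le_one h2 hx
  have hLx : ∀ i, |L x i| ≤ ∑ j, ∑ k, |g j k| := by
    intro i
    have hxe : x = ∑ j, x j • (fun k => if j = k then (1:ℝ) else 0) := by
      funext k
      simp [Finset.sum_apply, Finset.sum_ite_eq]
    have : L x = ∑ j, x j • g j := by
      conv_lhs => rw [hxe]
      rw [map_sum]
      exact Finset.sum_congr rfl fun j _ => by rw [map_smul]
    rw [this]
    calc |(∑ j, x j • g j) i| = |∑ j, x j * g j i| := by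
          simp [Finset.sum_apply]
      _ ≤ ∑ j, |x j * g j i| := Finset.abs_sum_le_sum_abs _ _
      _ ≤ ∑ j, |g j i| := by
          refine Finset.sum_le_sum fun j _ => ?_
          rw [abs_mul]
          exact mul_le_of_le_one_left (abs_nonneg _) (hxle j)
      _ ≤ ∑ j, ∑ k, |g j k| := by
          refine Finset.sum_le_sum fun j _ => ?_
          exact Finset.single_le_sum (f := fun k => |g j k|)
            (fun k _ => abs_nonneg _) (Finset.mem_univ i)
  have hcoord : ∀ i, |(x - L x) i| ≤ C := by
    intro i
    calc |(x - L x) i| = |x i - L x i| := by simp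
      _ ≤ |x i| + |L x i| := abs_sub _ _
      _ ≤ 1 + ∑ j, ∑ k, |g j k| := add_le_add (hxle i) (hLx i)
      _ = C := hC.symm
  exact pNorm_le_of_forall_abs_le h1 hC0 hcoord

lemma bddAbove_gelfandSet {p₁ p₂ : ℝ≥0∞} (h1 : 0 < p₂) (h2 : 0 < p₁) {N : ℕ}
    (M : Submodule ℝ (Fin N → ℝ)) :
    BddAbove {s : ℝ | ∃ x ∈ M, pNorm p₁ x ≤ 1 ∧ s = pNorm p₂ x} := by
  refine ⟨(N : ℝ) ^ (1 / p₂.toReal) * 1, ?_⟩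
  rintro s ⟨x, hxM, hx, rfl⟩
  exact pNorm_le_of_forall_abs_le h1 zero_le_one (abs_le_one_of_pNorm_le_one h2 hx)


/-- For `0 < p₂ ≤ p₁ ≤ ∞` and `1 ≤ n ≤ N`,
`a_n(id : ℓ_{p₁}^N → ℓ_{p₂}^N) = c_n(id : ℓ_{p₁}^N → ℓ_{p₂}^N) = (N-n+1)^{1/p₂-1/p₁}`. -/
theorem approx_eq_gelfand_diag (p₁ p₂ : ℝ≥0∞) (h1 : 0 < p₂) (h2 : p₂ ≤ p₁)
    (N n : ℕ) (hn : 1 ≤ n) (hnN : n ≤ N) :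
    approxNumber p₁ p₂ N n = ((N : ℝ) - n + 1) ^ (1 / p₂.toReal - 1 / p₁.toReal) ∧
    gelfandNumber p₁ p₂ N n = ((N : ℝ) - n + 1) ^ (1 / p₂.toReal - 1 / p₁.toReal) := by
  classical
  have h2' : 0 < p₁ := h1.trans_le h2
  have hθ : 0 ≤ 1 / p₂.toReal - 1 / p₁.toReal := theta_nonneg h1 h2
  set θ := 1 / p₂.toReal - 1 / p₁.toReal with hθdef
  set m := N - n + 1 with hm
  have hcast : ((m : ℕ) : ℝ) = (N : ℝ) - n + 1 := by
    rw [hm, Nat.cast_add, Nat.cast_sub hnN, Nat.cast_one]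
  -- zero membership in the inner sets
  have approx_zero_mem : ∀ L : (Fin N → ℝ) →ₗ[ℝ] (Fin N → ℝ),
      (0 : ℝ) ∈ {s : ℝ | ∃ x : Fin N → ℝ, pNorm p₁ x ≤ 1 ∧ s = pNorm p₂ (x - L x)} := by
    intro L
    refine ⟨0, by rw [pNorm_zero _ h2']; exact zero_le_one, ?_⟩
    rw [map_zero, sub_zero, pNorm_zero _ h1]
  have gelf_zero_mem : ∀ M : Submodule ℝ (Fin N → ℝ),
      (0 : ℝ) ∈ {s : ℝ | ∃ x ∈ M, pNorm p₁ x ≤ 1 ∧ s = pNorm p₂ x} := by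
    intro M
    refine ⟨0, M.zero_mem, by rw [pNorm_zero _ h2']; exact zero_le_one, ?_⟩
    rw [pNorm_zero _ h1]
  -- the outer sets are bounded below by 0
  have bbA : BddBelow { r : ℝ | ∃ L : (Fin N → ℝ) →ₗ[ℝ] (Fin N → ℝ),
      Module.finrank ℝ (↥(LinearMap.range L)) < n ∧
      r = sSup { s : ℝ | ∃ x : Fin N → ℝ, pNorm p₁ x ≤ 1 ∧ s = pNorm p₂ (x - L x) } } := by
    refine ⟨0, ?_⟩
    rintro r ⟨L, hL, rfl⟩
    exact le_csSup (bddAbove_approxSet h1 h2' L) (approx_zero_mem L)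
  have bbG : BddBelow { r : ℝ | ∃ M : Submodule ℝ (Fin N → ℝ),
      N - Module.finrank ℝ (↥M) < n ∧
      r = sSup { s : ℝ | ∃ x ∈ M, pNorm p₁ x ≤ 1 ∧ s = pNorm p₂ x } } := by
    refine ⟨0, ?_⟩
    rintro r ⟨M, hM, rfl⟩
    exact le_csSup (bddAbove_gelfandSet h1 h2' M) (gelf_zero_mem M)
  have hdim : Module.finrank ℝ (⊤ : Submodule ℝ (Fin N → ℝ)) = N := by
    rw [finrank_top, Module.finrank_pi, Fintype.card_fin]
  -- KEY 1 : the Gelfand number is at least the target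
  have key1 : ((N : ℝ) - n + 1) ^ θ ≤ gelfandNumber p₁ p₂ N n := by
    rw [gelfandNumber]
    refine le_csInf ⟨_, ⊤, by rw [hdim]; omega, rfl⟩ ?_
    rintro r ⟨M, hM, rfl⟩
    have hMle : Module.finrank ℝ M ≤ N := by
      have := Submodule.finrank_le M
      rwa [Module.finrank_pi, Fintype.card_fin] at this
    obtain ⟨x, hxM, hxle, hxcard⟩ := exists_flat_vector M
    have hmcard : m ≤ (Finset.univ.filter (fun i => |x i| = 1)).card := by
      refine le_trans ?_ hxcard
      omega
    have hm1 : 1 ≤ m := by omega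
    have hTne : (Finset.univ.filter (fun i => |x i| = 1)).Nonempty :=
      Finset.card_pos.1 (by omega)
    obtain ⟨i0, hi0⟩ := hTne
    have hi0' : |x i0| = 1 := (Finset.mem_filter.1 hi0).2
    have hc1 : (1 : ℝ) ≤ pNorm p₁ x := one_le_pNorm h2' hi0'
    have hc0 : (0 : ℝ) < pNorm p₁ x := lt_of_lt_of_le one_pos hc1
    have hz1 : pNorm p₁ ((pNorm p₁ x)⁻¹ • x) = 1 := by
      rw [pNorm_smul _ h2', abs_of_pos (inv_pos.2 hc0), inv_mul_cancel₀ hc0.ne']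
    have hzM : (pNorm p₁ x)⁻¹ • x ∈ M := M.smul_mem _ hxM
    have hlow : ((m : ℕ) : ℝ) ^ θ ≤ pNorm p₂ ((pNorm p₁ x)⁻¹ • x) := by
      rw [pNorm_smul _ h1, abs_of_pos (inv_pos.2 hc0)]
      have hkl := key_lower h1 h2 hxle hm1 hmcard
      calc ((m : ℕ) : ℝ) ^ θ = (pNorm p₁ x)⁻¹ * (((m : ℕ) : ℝ) ^ θ * pNorm p₁ x) := by
            field_simp
        _ ≤ (pNorm p₁ x)⁻¹ * pNorm p₂ x :=
            mul_le_mul_of_nonneg_left hkl (inv_nonneg.2 hc0.le)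
    calc ((N : ℝ) - n + 1) ^ θ = ((m : ℕ) : ℝ) ^ θ := by rw [hcast]
      _ ≤ pNorm p₂ ((pNorm p₁ x)⁻¹ • x) := hlow
      _ ≤ sSup { s : ℝ | ∃ x ∈ M, pNorm p₁ x ≤ 1 ∧ s = pNorm p₂ x } :=
          le_csSup (bddAbove_gelfandSet h1 h2' M) ⟨_, hzM, hz1.le, rfl⟩
  -- KEY 2 : Gelfand number ≤ approximation number
  have key2 : gelfandNumber p₁ p₂ N n ≤ approxNumber p₁ p₂ N n := by
    rw [approxNumber]
    refine le_csInf ⟨_, 0, ?_, rfl⟩ ?_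
    · rw [LinearMap.range_zero, finrank_bot]; omega
    rintro r ⟨L, hL, rfl⟩
    have hker : N - Module.finrank ℝ (LinearMap.ker L) < n := by
      have h := LinearMap.finrank_range_add_finrank_ker L
      rw [Module.finrank_pi, Fintype.card_fin] at h
      omega
    have step1 : gelfandNumber p₁ p₂ N n ≤
        sSup { s : ℝ | ∃ x ∈ LinearMap.ker L, pNorm p₁ x ≤ 1 ∧ s = pNorm p₂ x } := by
      rw [gelfandNumber]
      exact csInf_le bbG ⟨LinearMap.ker L, hker, rfl⟩
    refine step1.trans (csSup_le_csSup (bddAbove_approxSet h1 h2' L)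
      ⟨0, gelf_zero_mem _⟩ ?_)
    rintro s ⟨x, hxk, hx1, rfl⟩
    exact ⟨x, hx1, by rw [LinearMap.mem_ker.1 hxk, sub_zero]⟩
  -- KEY 3 : approximation number ≤ target
  have key3 : approxNumber p₁ p₂ N n ≤ ((N : ℝ) - n + 1) ^ θ := by
    set F : Finset (Fin N) := Finset.univ.filter (fun i => (i : ℕ) < n - 1) with hF
    set S : Finset (Fin N) := Finset.univ \ F with hS
    set L : (Fin N → ℝ) →ₗ[ℝ] (Fin N → ℝ) :=
      LinearMap.pi (fun i => if (i : ℕ) < n - 1 then LinearMap.proj i else 0) with hL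
    have hLapp : ∀ (x : Fin N → ℝ) (i : Fin N), L x i = if (i : ℕ) < n - 1 then x i else 0 := by
      intro x i
      rw [hL, LinearMap.pi_apply]
      by_cases h : (i : ℕ) < n - 1 <;> simp [h]
    have hFcard : F.card ≤ n - 1 := by
      have : F.card ≤ (Finset.range (n - 1)).card := by
        refine Finset.card_le_card_of_injOn (fun i => (i : ℕ)) ?_ ?_
        · intro i hi
          rw [hF] at hi
          rw [Finset.mem_coe, Finset.mem_range]
          exact (Finset.mem_filter.1 hi).2
        · intro a _ b _ hab
          exact Fin.ext hab
      simpa using this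
    have hScard : S.card ≤ m := by
      have : S.card ≤ (Finset.range m).card := by
        refine Finset.card_le_card_of_injOn (fun i => (i : ℕ) - (n - 1)) ?_ ?_
        · intro i hi
          have hi' : i ∈ Finset.univ \ F := hi
          have h1 : ¬ (i : ℕ) < n - 1 := fun hcon =>
            (Finset.mem_sdiff.1 hi').2 (Finset.mem_filter.2 ⟨Finset.mem_univ i, hcon⟩)
          have h2 := i.isLt
          simp only [Finset.mem_coe, Finset.mem_range]
          omega
        · intro a ha b hb hab
          have ha' : a ∈ Finset.univ \ F := Finset.mem_coe.1 ha
          have hb' : b ∈ Finset.univ \ F := Finset.mem_coe.1 hb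
          have h1 : ¬ (a : ℕ) < n - 1 := fun hcon =>
            (Finset.mem_sdiff.1 ha').2 (Finset.mem_filter.2 ⟨Finset.mem_univ a, hcon⟩)
          have h2 : ¬ (b : ℕ) < n - 1 := fun hcon =>
            (Finset.mem_sdiff.1 hb').2 (Finset.mem_filter.2 ⟨Finset.mem_univ b, hcon⟩)
          simp only at hab
          have h3 := a.isLt
          have h4 := b.isLt
          exact Fin.ext (by omega)
      simpa using this
    have hrank : Module.finrank ℝ (LinearMap.range L) < n := by
      have hle : LinearMap.range L ≤
          LinearMap.ker (LinearMap.funLeft ℝ ℝ (fun i : ↥S => (i : Fin N))) := by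
        rintro y ⟨x, rfl⟩
        rw [LinearMap.mem_ker]
        funext i
        rw [LinearMap.funLeft_apply]
        have hiS : (i : Fin N) ∈ Finset.univ \ F := i.2
        have h1 : ¬ ((i : Fin N) : ℕ) < n - 1 := fun hcon =>
          (Finset.mem_sdiff.1 hiS).2 (Finset.mem_filter.2 ⟨Finset.mem_univ _, hcon⟩)
        simp [hLapp, h1]
      have := Submodule.finrank_mono hle
      rw [finrank_ker_funLeft S] at this
      have hSc : S.card = N - F.card := by
        rw [hS, Finset.card_sdiff_of_subset (Finset.subset_univ F)]
        simp
      omega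
    have happle : approxNumber p₁ p₂ N n ≤
        sSup { s : ℝ | ∃ x : Fin N → ℝ, pNorm p₁ x ≤ 1 ∧ s = pNorm p₂ (x - L x) } := by
      rw [approxNumber]
      exact csInf_le bbA ⟨L, hrank, rfl⟩
    refine happle.trans (csSup_le ⟨0, approx_zero_mem L⟩ ?_)
    rintro s ⟨x, hx1, rfl⟩
    have hyx : ∀ i, |(x - L x) i| ≤ |x i| := by
      intro i
      by_cases h : (i : ℕ) < n - 1
      · simp [hLapp, h]
      · simp [hLapp, h]
    have hy0 : ∀ i ∉ S, (x - L x) i = 0 := by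
      intro i hi
      have hiF : i ∈ F := by
        by_contra hiF
        exact hi (by rw [hS]; exact Finset.mem_sdiff.2 ⟨Finset.mem_univ i, hiF⟩)
      rw [hF, Finset.mem_filter] at hiF
      simp [hLapp, hiF.2]
    calc pNorm p₂ (x - L x) ≤ (S.card : ℝ) ^ θ * pNorm p₁ x := key_upper h1 h2 S hyx hy0
      _ ≤ ((m : ℕ) : ℝ) ^ θ * 1 :=
          mul_le_mul (Real.rpow_le_rpow (Nat.cast_nonneg _) (Nat.cast_le.2 hScard) hθ)
            hx1 (pNorm_nonneg _ _) (Real.rpow_nonneg (Nat.cast_nonneg _) _)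
      _ = ((N : ℝ) - n + 1) ^ θ := by rw [mul_one, hcast]
  exact ⟨le_antisymm key3 (key1.trans key2), le_antisymm (key2.trans key3) key1⟩
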